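/- Let k be a positive integer, and let c₁, …, c_k, d₁, …, d_k be positive integers with c_j and d_j relatively prime for each 1 ≤ j ≤ k. Then the set of positive integers m for which the inequalities φ(c₁m+d₁)/(c₁m+d₁) > e^{-k}, φ(c₂m+d₂)/(c₂m+d₂) > e^{-k}, …, φ(c_km+d_k)/(c_km+d_k) > e^{-k} are all satisfied has lower density at least 3/10. -/

import Mathlib

open Finset Filter

noncomputable def tw (p : ℕ) : ℝ := if p = 2 then Real.log 2 else 1 / ((p : ℝ) - 1)

lemma tw_nonneg {p : ℕ} (hp : p.Prime) : 0 ≤ tw p := by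
  unfold tw
  split
  · positivity
  · have h2 := hp.two_le
    have : (2:ℝ) ≤ p := by exact_mod_cast h2
    have : (1:ℝ) ≤ (p:ℝ) - 1 := by linarith
    positivity

lemma exp_neg_tw_le {p : ℕ} (hp : p.Prime) : Real.exp (-tw p) ≤ ((p:ℝ) - 1) / p := by
  have h2 := hp.two_le
  have hp2 : (2:ℝ) ≤ p := by exact_mod_cast h2
  have hp0 : (0:ℝ) < p := by linarith
  have hp1 : (0:ℝ) < (p:ℝ) - 1 := by linarith
  unfold tw
  split
  case isTrue h =>
    subst h
    rw [Real.exp_neg, Real.exp_log (by norm_num)]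
    norm_num
  case isFalse h =>
    rw [Real.exp_neg]
    rw [inv_le_iff_one_le_mul₀ (Real.exp_pos _)]
    have key : (p:ℝ) / ((p:ℝ) - 1) ≤ Real.exp (1 / ((p:ℝ) - 1)) := by
      have h1 : (p:ℝ) / ((p:ℝ)-1) = 1 / ((p:ℝ)-1) + 1 := by field_simp; ring
      linarith [Real.add_one_le_exp (1 / ((p:ℝ) - 1))]
    calc (1:ℝ) = (((p:ℝ)-1)/p) * ((p:ℝ)/((p:ℝ)-1)) := by field_simp
    _ ≤ (((p:ℝ)-1)/p) * Real.exp (1/((p:ℝ)-1)) := by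
        apply mul_le_mul_of_nonneg_left key; positivity

lemma totient_ratio_eq (n : ℕ) (hn : 0 < n) :
    (Nat.totient n : ℝ) / n = ∏ p ∈ n.primeFactors, (((p:ℝ) - 1) / p) := by
  have key := Nat.totient_mul_prod_primeFactors n
  have hP : (0:ℝ) < ∏ p ∈ n.primeFactors, (p:ℝ) := by
    apply Finset.prod_pos
    intro p hp
    exact_mod_cast (Nat.prime_of_mem_primeFactors hp).pos
  have hcast : ((Nat.totient n : ℝ)) * ∏ p ∈ n.primeFactors, (p:ℝ)
      = (n:ℝ) * ∏ p ∈ n.primeFactors, ((p:ℝ) - 1) := by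
    have := congrArg (fun t : ℕ => (t : ℝ)) key
    push_cast at this
    convert this using 2
    apply Finset.prod_congr rfl
    intro p hp
    have h1 : 1 ≤ p := (Nat.prime_of_mem_primeFactors hp).pos
    push_cast [Nat.cast_sub h1]
    ring
  rw [Finset.prod_div_distrib]
  rw [div_eq_div_iff (by exact_mod_cast hn.ne') hP.ne']
  linarith [hcast]

lemma totient_lower {n : ℕ} (hn : 0 < n) {K : ℝ} (h : ∑ p ∈ n.primeFactors, tw p < K) :
    Real.exp (-K) < (Nat.totient n : ℝ) / n := by
  rw [totient_ratio_eq n hn]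
  have h1 : Real.exp (-K) < Real.exp (-(∑ p ∈ n.primeFactors, tw p)) := by
    rw [Real.exp_lt_exp]; linarith
  refine h1.trans_le ?_
  have : Real.exp (-(∑ p ∈ n.primeFactors, tw p))
      = ∏ p ∈ n.primeFactors, Real.exp (-tw p) := by
    rw [← Real.exp_sum, ← Finset.sum_neg_distrib]
  rw [this]
  apply Finset.prod_le_prod
  · intro p hp; positivity
  · intro p hp; exact exp_neg_tw_le (Nat.prime_of_mem_primeFactors hp)

lemma count_dvd_le (p c d x : ℕ) (hp : p.Prime) (hcop : Nat.Coprime c d) :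
    ((Finset.Icc 1 x).filter (fun m => p ∣ c * m + d)).card ≤ x / p + 1 := by
  by_cases hpc : p ∣ c
  · have : (Finset.Icc 1 x).filter (fun m => p ∣ c * m + d) = ∅ := by
      apply Finset.filter_eq_empty_iff.mpr
      intro m _ hdvd
      have hpd : p ∣ d := (Nat.dvd_add_right (hpc.mul_right m)).mp hdvd
      exact hp.one_lt.ne' (Nat.eq_one_of_dvd_coprimes hcop hpc hpd)
    simp [this]
  · have key : ∀ m₁ m₂ : ℕ, p ∣ c * m₁ + d → p ∣ c * m₂ + d → m₁ < m₂ →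
        m₁ / p + 1 ≤ m₂ / p := by
      intro m₁ m₂ hd₁ hd₂ hlt
      have hdvd : p ∣ c * (m₂ - m₁) := by
        have h := Nat.dvd_sub hd₂ hd₁
        rwa [show c * m₂ + d - (c * m₁ + d) = c * (m₂ - m₁) by
          rw [Nat.mul_sub]; omega] at h
      have hpm : p ∣ m₂ - m₁ := (hp.dvd_mul.mp hdvd).resolve_left hpc
      have hge : m₁ + p ≤ m₂ := by
        have : p ≤ m₂ - m₁ := Nat.le_of_dvd (by omega) hpm
        omega
      calc m₁ / p + 1 = (m₁ + p) / p := (Nat.add_div_right m₁ hp.pos).symm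
      _ ≤ m₂ / p := Nat.div_le_div_right hge
    have hinj : Set.InjOn (fun m => m / p)
        ((Finset.Icc 1 x).filter (fun m => p ∣ c * m + d)) := by
      intro m₁ h₁ m₂ h₂ heq
      simp only [Finset.coe_filter, Set.mem_setOf_eq, Finset.mem_Icc] at h₁ h₂
      dsimp only at heq
      rcases lt_trichotomy m₁ m₂ with h | h | h
      · have := key m₁ m₂ h₁.2 h₂.2 h; omega
      · exact h
      · have := key m₂ m₁ h₂.2 h₁.2 h; omega
    have hmaps : ∀ m ∈ (Finset.Icc 1 x).filter (fun m => p ∣ c * m + d),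
        m / p ∈ Finset.range (x / p + 1) := by
      intro m hm
      simp only [Finset.mem_filter, Finset.mem_Icc] at hm
      simp only [Finset.mem_range]
      exact Nat.lt_succ_of_le (Nat.div_le_div_right hm.1.2)
    calc ((Finset.Icc 1 x).filter (fun m => p ∣ c * m + d)).card
        ≤ (Finset.range (x / p + 1)).card := Finset.card_le_card_of_injOn _ hmaps hinj
    _ = x / p + 1 := Finset.card_range _

lemma small_primes {p : ℕ} (hp : p.Prime) (h : p < 11) : p = 2 ∨ p = 3 ∨ p = 5 ∨ p = 7 := by
  interval_cases p <;> revert hp <;> decide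

lemma sum_tw_div_le (N : ℕ) :
    ∑ p ∈ (Finset.range N).filter Nat.Prime, tw p / p
      ≤ Real.log 2 / 2 + 1/6 + 1/20 + 1/42 + 1/10 := by
  set P := (Finset.range N).filter Nat.Prime with hP
  have hprime : ∀ p ∈ P, p.Prime := by
    intro p hp; exact (Finset.mem_filter.mp hp).2
  rw [← Finset.sum_filter_add_sum_filter_not P (fun p => p < 11)]
  have hsmall : ∑ p ∈ P.filter (fun p => p < 11), tw p / p
      ≤ Real.log 2 / 2 + 1/6 + 1/20 + 1/42 := by
    have hsub : P.filter (fun p => p < 11) ⊆ ({2,3,5,7} : Finset ℕ) := by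
      intro p hp
      simp only [Finset.mem_filter] at hp
      have := small_primes (hprime p hp.1) hp.2
      simp only [Finset.mem_insert, Finset.mem_singleton]
      tauto
    calc ∑ p ∈ P.filter (fun p => p < 11), tw p / p
        ≤ ∑ p ∈ ({2,3,5,7} : Finset ℕ), tw p / p := by
          apply Finset.sum_le_sum_of_subset_of_nonneg hsub
          intro p hp _
          simp only [Finset.mem_insert, Finset.mem_singleton] at hp
          have hpp : p.Prime := by rcases hp with h|h|h|h <;> subst h <;> norm_num
          have := tw_nonneg hpp
          positivity
    _ = Real.log 2 / 2 + 1/6 + 1/20 + 1/42 := by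
          norm_num [tw]
          ring
  have hlarge : ∑ p ∈ P.filter (fun p => ¬ p < 11), tw p / p ≤ 1/10 := by
    have hcong : ∑ p ∈ P.filter (fun p => ¬ p < 11), tw p / p
        = ∑ p ∈ P.filter (fun p => ¬ p < 11), (1/((p:ℝ)-1) - 1/p) := by
      apply Finset.sum_congr rfl
      intro p hp
      simp only [Finset.mem_filter] at hp
      have h11 : 11 ≤ p := by omega
      have hne : p ≠ 2 := by omega
      have hcast : (11:ℝ) ≤ (p:ℝ) := by exact_mod_cast h11
      have h1 : ((p:ℝ)-1) ≠ 0 := by linarith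
      have h0 : ((p:ℝ)) ≠ 0 := by linarith
      rw [tw, if_neg hne, div_div, div_sub_div _ _ h1 h0]
      congr 1
      ring
    rw [hcong]
    have hsub : P.filter (fun p => ¬ p < 11) ⊆ Finset.Ico 11 N := by
      intro p hp
      simp only [Finset.mem_filter, hP, Finset.mem_range] at hp
      simp only [Finset.mem_Ico]
      omega
    have h2 : ∑ p ∈ P.filter (fun p => ¬ p < 11), (1/((p:ℝ)-1) - 1/p)
        ≤ ∑ n ∈ Finset.Ico 11 N, (1/((n:ℝ)-1) - 1/n) := by
      apply Finset.sum_le_sum_of_subset_of_nonneg hsub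
      intro n hn _
      simp only [Finset.mem_Ico] at hn
      have hcast : (11:ℝ) ≤ (n:ℝ) := by exact_mod_cast hn.1
      have h1 : (0:ℝ) < (n:ℝ) - 1 := by linarith
      have := one_div_le_one_div_of_le h1 (by linarith : (n:ℝ)-1 ≤ n)
      linarith
    refine h2.trans ?_
    rw [Finset.sum_Ico_eq_sum_range]
    set F : ℕ → ℝ := fun i => 1/((i:ℝ)+10) with hF
    have heq : ∑ i ∈ Finset.range (N - 11), (1/(((11+i:ℕ):ℝ)-1) - 1/((11+i:ℕ):ℝ))
        = ∑ i ∈ Finset.range (N - 11), (F i - F (i+1)) := by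
      apply Finset.sum_congr rfl
      intro i _
      simp only [hF]
      push_cast
      ring
    rw [heq, Finset.sum_range_sub' F]
    have h3 : (0:ℝ) ≤ F (N-11) := by simp only [hF]; positivity
    have h4 : F 0 = 1/10 := by simp [hF]
    linarith
  linarith

lemma sum_tw_le (N : ℕ) :
    ∑ p ∈ (Finset.range N).filter Nat.Prime, tw p
      ≤ Real.log 2 + Real.log N := by
  set P := (Finset.range N).filter Nat.Prime with hP
  have hlogN : 0 ≤ Real.log N := Real.log_natCast_nonneg N
  have h2 : ∑ p ∈ P, tw p ≤ Real.log 2 + ∑ p ∈ P.erase 2, tw p := by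
    by_cases h2P : 2 ∈ P
    · rw [← Finset.add_sum_erase P tw h2P]
      simp [tw]
    · rw [Finset.erase_eq_of_notMem h2P]
      have : (0:ℝ) ≤ Real.log 2 := Real.log_nonneg (by norm_num)
      linarith
  refine h2.trans ?_
  have hmain : ∑ p ∈ P.erase 2, tw p ≤ Real.log N := by
    have hcong : ∑ p ∈ P.erase 2, tw p
        ≤ ∑ p ∈ P.erase 2, (Real.log ((p:ℝ)-1) - Real.log ((p:ℝ)-2)) := by
      apply Finset.sum_le_sum
      intro p hp
      have hmem := Finset.mem_of_mem_erase hp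
      have hprime : p.Prime := (Finset.mem_filter.mp hmem).2
      have hne : p ≠ 2 := Finset.ne_of_mem_erase hp
      have h3 : 3 ≤ p := by
        have := hprime.two_le
        omega
      have hc : (3:ℝ) ≤ (p:ℝ) := by exact_mod_cast h3
      rw [tw, if_neg hne]
      have hpos : (0:ℝ) < (p:ℝ) - 2 := by linarith
      have hpos1 : (0:ℝ) < (p:ℝ) - 1 := by linarith
      have hlog := Real.log_le_sub_one_of_pos (show (0:ℝ) < ((p:ℝ)-2)/((p:ℝ)-1) by positivity)
      rw [Real.log_div hpos.ne' hpos1.ne'] at hlog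
      have : ((p:ℝ)-2)/((p:ℝ)-1) - 1 = -(1/((p:ℝ)-1)) := by field_simp; norm_num
      linarith
    refine hcong.trans ?_
    have hsub : P.erase 2 ⊆ Finset.Ico 3 N := by
      intro p hp
      have hmem := Finset.mem_of_mem_erase hp
      simp only [hP, Finset.mem_filter, Finset.mem_range] at hmem
      have hne : p ≠ 2 := Finset.ne_of_mem_erase hp
      have := hmem.2.two_le
      simp only [Finset.mem_Ico]
      omega
    have h4 : ∑ p ∈ P.erase 2, (Real.log ((p:ℝ)-1) - Real.log ((p:ℝ)-2))
        ≤ ∑ n ∈ Finset.Ico 3 N, (Real.log ((n:ℝ)-1) - Real.log ((n:ℝ)-2)) := by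
      apply Finset.sum_le_sum_of_subset_of_nonneg hsub
      intro n hn _
      simp only [Finset.mem_Ico] at hn
      have hc : (3:ℝ) ≤ (n:ℝ) := by exact_mod_cast hn.1
      have h5 : (0:ℝ) < (n:ℝ) - 2 := by linarith
      have := Real.log_le_log h5 (by linarith : (n:ℝ)-2 ≤ (n:ℝ)-1)
      linarith
    refine h4.trans ?_
    rw [Finset.sum_Ico_eq_sum_range]
    set G : ℕ → ℝ := fun i => Real.log ((i:ℝ)+1) with hG
    have heq : ∑ i ∈ Finset.range (N - 3), (Real.log (((3+i:ℕ):ℝ)-1) - Real.log (((3+i:ℕ):ℝ)-2))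
        = ∑ i ∈ Finset.range (N - 3), (G (i+1) - G i) := by
      apply Finset.sum_congr rfl
      intro i _
      simp only [hG]
      push_cast
      ring_nf
    rw [heq, Finset.sum_range_sub G]
    have hG0 : G 0 = 0 := by simp [hG]
    have hGle : G (N-3) ≤ Real.log N := by
      simp only [hG]
      by_cases hN : N = 0
      · subst hN; simp
      · apply Real.log_le_log (by positivity)
        have h1 : N - 3 + 1 ≤ N := by omega
        exact_mod_cast h1
    linarith
  linarith

lemma sum_over_m (c d x : ℕ) (hc : 0 < c) (hd : 0 < d) (hcop : Nat.Coprime c d) :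
    ∑ m ∈ Finset.Icc 1 x, ∑ p ∈ (c*m+d).primeFactors, tw p
      ≤ x * (Real.log 2/2 + 1/6 + 1/20 + 1/42 + 1/10)
        + (Real.log 2 + Real.log ((c*x+d+1 : ℕ) : ℝ)) := by
  set N := c*x+d+1 with hN
  set bigP := (Finset.range N).filter Nat.Prime with hbigP
  have hfac : ∀ m ∈ Finset.Icc 1 x, (c*m+d).primeFactors = bigP.filter (· ∣ c*m+d) := by
    intro m hm
    simp only [Finset.mem_Icc] at hm
    ext p
    simp only [Nat.mem_primeFactors, hbigP, Finset.mem_filter, Finset.mem_range]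
    constructor
    · rintro ⟨hp, hdvd, hne⟩
      refine ⟨⟨?_, hp⟩, hdvd⟩
      have h1 : p ≤ c*m+d := Nat.le_of_dvd (by positivity) hdvd
      have h2 : c*m ≤ c*x := Nat.mul_le_mul_left c hm.2
      omega
    · rintro ⟨⟨_, hp⟩, hdvd⟩
      exact ⟨hp, hdvd, by positivity⟩
  calc ∑ m ∈ Finset.Icc 1 x, ∑ p ∈ (c*m+d).primeFactors, tw p
      = ∑ m ∈ Finset.Icc 1 x, ∑ p ∈ bigP, (if p ∣ c*m+d then tw p else 0) := by
        apply Finset.sum_congr rfl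
        intro m hm
        rw [hfac m hm, Finset.sum_filter]
  _ = ∑ p ∈ bigP, ∑ m ∈ Finset.Icc 1 x, (if p ∣ c*m+d then tw p else 0) := Finset.sum_comm
  _ = ∑ p ∈ bigP, (((Finset.Icc 1 x).filter (fun m => p ∣ c*m+d)).card : ℝ) * tw p := by
        apply Finset.sum_congr rfl
        intro p _
        rw [← Finset.sum_filter, Finset.sum_const, nsmul_eq_mul]
  _ ≤ ∑ p ∈ bigP, ((x:ℝ)/p + 1) * tw p := by
        apply Finset.sum_le_sum
        intro p hp
        have hprime : p.Prime := (Finset.mem_filter.mp hp).2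
        have h1 : (((Finset.Icc 1 x).filter (fun m => p ∣ c*m+d)).card : ℝ) ≤ (x:ℝ)/p + 1 := by
          have h2 := count_dvd_le p c d x hprime hcop
          have h3 : ((x/p : ℕ) : ℝ) ≤ (x:ℝ)/p := Nat.cast_div_le
          have h4 : (((Finset.Icc 1 x).filter (fun m => p ∣ c*m+d)).card : ℝ)
              ≤ ((x/p + 1 : ℕ) : ℝ) := by exact_mod_cast h2
          push_cast at h4
          linarith
        exact mul_le_mul_of_nonneg_right h1 (tw_nonneg hprime)
  _ = (x:ℝ) * (∑ p ∈ bigP, tw p / p) + ∑ p ∈ bigP, tw p := by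
        rw [Finset.mul_sum, ← Finset.sum_add_distrib]
        apply Finset.sum_congr rfl
        intro p hp
        have hprime : p.Prime := (Finset.mem_filter.mp hp).2
        have : (p:ℝ) ≠ 0 := by exact_mod_cast hprime.pos.ne'
        field_simp
  _ ≤ (x:ℝ) * (Real.log 2/2 + 1/6 + 1/20 + 1/42 + 1/10) + (Real.log 2 + Real.log (N:ℝ)) := by
        have h1 := sum_tw_div_le N
        have h2 := sum_tw_le N
        have hx : (0:ℝ) ≤ x := by positivity
        have := mul_le_mul_of_nonneg_left h1 hx
        linarith

lemma eventually_log_le (C : ℝ) : ∀ᶠ x : ℕ in atTop, C + Real.log x ≤ x / 100 := by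
  have h1 : Tendsto (fun x : ℝ => Real.log x / x) atTop (nhds 0) :=
    Real.isLittleO_log_id_atTop.tendsto_div_nhds_zero
  have h2 : Tendsto (fun n : ℕ => Real.log n / n) atTop (nhds 0) :=
    h1.comp tendsto_natCast_atTop_atTop
  have h3 : Tendsto (fun n : ℕ => C / n) atTop (nhds 0) :=
    tendsto_const_div_atTop_nhds_zero_nat C
  have h4 : Tendsto (fun n : ℕ => C / n + Real.log n / n) atTop (nhds 0) := by
    simpa using h3.add h2
  have h5 : ∀ᶠ n : ℕ in atTop, C / n + Real.log n / n < 1/100 :=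
    h4.eventually_lt_const (show (0:ℝ) < 1/100 by norm_num)
  filter_upwards [h5, eventually_ge_atTop 1] with n hn hn1
  have hx : (0:ℝ) < n := by exact_mod_cast hn1
  rw [← add_div] at hn
  have := (div_lt_iff₀ hx).mp hn
  linarith

lemma helper2 (P : ℕ → Prop) [DecidablePred P] (x : ℕ) (a : ℝ) (hx0 : (0:ℝ) < x)
    (T : Finset ℕ) (hT : T ⊆ Finset.Icc 1 x) (hTP : ∀ m ∈ T, P m)
    (hcard : a * x ≤ (T.card : ℝ)) :
    a ≤ (((Finset.Icc 1 x).filter P).card : ℝ) / x := by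
  rw [le_div_iff₀ hx0]
  refine hcard.trans ?_
  exact_mod_cast Finset.card_le_card
    (fun m hm => Finset.mem_filter.mpr ⟨hT hm, hTP m hm⟩)

lemma density_lemma (P : ℕ → Prop) [DecidablePred P] (a : ℝ)
    (h : ∀ᶠ x : ℕ in atTop, a ≤ (((Finset.Icc 1 x).filter P).card : ℝ) / x) :
    a ≤ Filter.atTop.liminf (fun x : ℕ => (((Finset.Icc 1 x).filter P).card : ℝ) / x) := by
  refine le_liminf_of_le ?_ h
  apply Filter.IsBoundedUnder.isCoboundedUnder_flip
  refine isBoundedUnder_of ⟨1, fun x => ?_⟩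
  by_cases hx : x = 0
  · subst hx; simp
  · have hx0 : (0:ℝ) < x := by positivity
    rw [div_le_one hx0]
    have h1 : ((Finset.Icc 1 x).filter P).card ≤ (Finset.Icc 1 x).card :=
      Finset.card_le_card (Finset.filter_subset _ _)
    have h2 : (Finset.Icc 1 x).card = x := by rw [Nat.card_Icc]; omega
    exact_mod_cast h1.trans_eq h2

open scoped Classical in
/-- The lower density of a set of positive integers:
`liminf_{x→∞} #{n ∈ S : n ≤ x} / x`. -/
noncomputable def lowerDensity (S : Set ℕ) : ℝ :=
  Filter.atTop.liminf fun x : ℕ =>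
    (((Finset.Icc 1 x).filter (fun n => n ∈ S)).card : ℝ) / x

theorem totient_ratio_large_often
    (k : ℕ) (hk : 0 < k) (c d : ℕ → ℕ)
    (hc : ∀ j, j < k → 0 < c j) (hd : ∀ j, j < k → 0 < d j)
    (hcd : ∀ j, j < k → Nat.Coprime (c j) (d j)) :
    (3 : ℝ) / 10 ≤ lowerDensity {m : ℕ | 0 < m ∧
      ∀ j, j < k →
        ((Nat.totient (c j * m + d j) : ℝ) / (c j * m + d j) > Real.exp (-(k : ℝ)))} := by
  rw [lowerDensity]
  set A : ℝ := Real.log 2/2 + 1/6 + 1/20 + 1/42 + 1/10 with hA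
  set B : ℕ := ∑ j ∈ Finset.range k, (c j + d j + 1) with hB
  have hB1 : 1 ≤ B := by
    rw [hB]
    calc 1 ≤ c 0 + d 0 + 1 := by omega
    _ ≤ ∑ j ∈ Finset.range k, (c j + d j + 1) :=
        Finset.single_le_sum (f := fun j => c j + d j + 1)
          (fun j _ => Nat.zero_le _) (Finset.mem_range.mpr hk)
  set W : ℕ → ℝ := fun m => ∑ j ∈ Finset.range k, ∑ p ∈ (c j * m + d j).primeFactors, tw p
    with hW
  have hWinner : ∀ m j, 0 ≤ ∑ p ∈ (c j * m + d j).primeFactors, tw p := by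
    intro m j
    apply Finset.sum_nonneg
    intro p hp
    exact tw_nonneg (Nat.prime_of_mem_primeFactors hp)
  have hWnn : ∀ m, 0 ≤ W m := by
    intro m
    apply Finset.sum_nonneg
    intro j _
    exact hWinner m j
  refine @density_lemma _ (fun a => Classical.propDecidable _) _ ?_
  filter_upwards [eventually_log_le (Real.log 2 + Real.log B), eventually_ge_atTop 1]
    with x hlog hx1
  have hx0 : (0:ℝ) < x := by exact_mod_cast hx1
  -- total weight bound
  have htot : ∑ m ∈ Finset.Icc 1 x, W m ≤ (k:ℝ) * ((x:ℝ) * A + (x:ℝ)/100) := by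
    have hswap : ∑ m ∈ Finset.Icc 1 x, W m
        = ∑ j ∈ Finset.range k, ∑ m ∈ Finset.Icc 1 x,
            ∑ p ∈ (c j * m + d j).primeFactors, tw p := Finset.sum_comm
    rw [hswap]
    have hbound : ∀ j ∈ Finset.range k,
        ∑ m ∈ Finset.Icc 1 x, ∑ p ∈ (c j * m + d j).primeFactors, tw p
          ≤ (x:ℝ) * A + (x:ℝ)/100 := by
      intro j hj
      rw [Finset.mem_range] at hj
      refine (sum_over_m (c j) (d j) x (hc j hj) (hd j hj) (hcd j hj)).trans ?_
      have hle : c j * x + d j + 1 ≤ B * x := by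
        have h1 : c j + d j + 1 ≤ B :=
          Finset.single_le_sum (f := fun j => c j + d j + 1)
            (fun i _ => Nat.zero_le _) (Finset.mem_range.mpr hj)
        calc c j * x + d j + 1 ≤ c j * x + (d j + 1) * x := by
              have : d j + 1 ≤ (d j + 1) * x := Nat.le_mul_of_pos_right _ hx1
              omega
        _ = (c j + d j + 1) * x := by ring
        _ ≤ B * x := Nat.mul_le_mul_right x h1
      have hlogle : Real.log ((c j * x + d j + 1 : ℕ) : ℝ) ≤ Real.log B + Real.log x := by
        have h2 : ((c j * x + d j + 1 : ℕ) : ℝ) ≤ (B:ℝ) * x := by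
          push_cast
          exact_mod_cast hle
        have hpos : (0:ℝ) < ((c j * x + d j + 1 : ℕ) : ℝ) := by positivity
        calc Real.log ((c j * x + d j + 1 : ℕ) : ℝ) ≤ Real.log ((B:ℝ) * x) :=
              Real.log_le_log hpos h2
        _ = Real.log B + Real.log x := by
              apply Real.log_mul
              · exact_mod_cast Nat.one_le_iff_ne_zero.mp hB1
              · exact hx0.ne'
      rw [hA]
      linarith
    calc ∑ j ∈ Finset.range k, ∑ m ∈ Finset.Icc 1 x,
          ∑ p ∈ (c j * m + d j).primeFactors, tw p
        ≤ ∑ _j ∈ Finset.range k, ((x:ℝ) * A + (x:ℝ)/100) := Finset.sum_le_sum hbound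
    _ = (k:ℝ) * ((x:ℝ) * A + (x:ℝ)/100) := by
          rw [Finset.sum_const, Finset.card_range, nsmul_eq_mul]
  -- bad set
  set Bad := (Finset.Icc 1 x).filter (fun m => (k:ℝ) ≤ W m) with hBad
  have hbadcard : (Bad.card : ℝ) ≤ (x:ℝ) * A + (x:ℝ)/100 := by
    have h1 : (Bad.card : ℝ) * k ≤ ∑ m ∈ Bad, W m := by
      have := Finset.card_nsmul_le_sum Bad W (k:ℝ) (fun m hm => (Finset.mem_filter.mp hm).2)
      rw [nsmul_eq_mul] at this
      exact this
    have h2 : ∑ m ∈ Bad, W m ≤ ∑ m ∈ Finset.Icc 1 x, W m :=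
      Finset.sum_le_sum_of_subset_of_nonneg (Finset.filter_subset _ _)
        (fun m _ _ => hWnn m)
    have hk0 : (0:ℝ) < k := by exact_mod_cast hk
    have h3 : (Bad.card : ℝ) * k ≤ (k:ℝ) * ((x:ℝ) * A + (x:ℝ)/100) := by linarith
    rw [mul_comm] at h3
    exact le_of_mul_le_mul_left h3 hk0
  have hBadsub : Bad ⊆ Finset.Icc 1 x := Finset.filter_subset _ _
  have hcardIcc : (Finset.Icc 1 x).card = x := by rw [Nat.card_Icc]; omega
  have hcardBadle : Bad.card ≤ x := by
    calc Bad.card ≤ (Finset.Icc 1 x).card := Finset.card_le_card hBadsub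
    _ = x := hcardIcc
  refine @helper2 _ (fun a => Classical.propDecidable _) x _ hx0 (Finset.Icc 1 x \ Bad) Finset.sdiff_subset ?_ ?_
  · -- good elements are in S
    intro m hm
    rw [Finset.mem_sdiff] at hm
    obtain ⟨hmIcc, hmBad⟩ := hm
    have hWm : W m < k := by
      by_contra h
      exact hmBad (Finset.mem_filter.mpr ⟨hmIcc, not_lt.mp h⟩)
    constructor
    · rw [Finset.mem_Icc] at hmIcc; omega
    · intro j hj
      have hinner : ∑ p ∈ (c j * m + d j).primeFactors, tw p ≤ W m := by
        rw [hW]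
        exact Finset.single_le_sum (f := fun j => ∑ p ∈ (c j * m + d j).primeFactors, tw p)
          (fun i _ => hWinner m i) (Finset.mem_range.mpr hj)
      have hnpos : 0 < c j * m + d j := by
        have := hd j hj
        omega
      have hres := totient_lower hnpos (K := (k:ℝ)) (lt_of_le_of_lt hinner hWm)
      push_cast at hres ⊢
      exact hres
  · -- cardinality bound
    have hcard : ((Finset.Icc 1 x \ Bad).card : ℝ) = (x:ℝ) - Bad.card := by
      rw [Finset.card_sdiff_of_subset hBadsub, hcardIcc]
      rw [Nat.cast_sub hcardBadle]
    rw [hcard]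
    have hlog2 : Real.log 2 < 0.6931471808 := Real.log_two_lt_d9
    have hAval : A + 1/100 ≤ 7/10 := by
      rw [hA]
      norm_num
      linarith
    nlinarith [hx0.le]
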